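/- Let n ≥ 1, let s be a seminorm on ℝⁿ, let Q ≥ 1, and let T : ℝⁿ → ℝⁿ be a bijective linear map such that the norm v ↦ |T(v)| (Euclidean norm of T(v)) is Q-quasi-conformal. Then Q^{−(n−1)}·𝓘ⁿ_+(s) ≤ |det T|^{−1}·𝓘ⁿ_+(s ∘ T) ≤ Q^{n−1}·𝓘ⁿ_+(s). -/

import Mathlib

open MeasureTheory Metric Module Finset
open scoped RealInnerProductSpace

/-- `𝓘^p_+(s) = max{s(v)^p : v ∈ S^{n-1}}`, realized as the supremum over the unit sphere. -/
noncomputable def Iplus (n : ℕ) (p : ℝ) (s : Seminorm ℝ (EuclideanSpace ℝ (Fin n))) : ℝ :=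
  ⨆ v : sphere (0 : EuclideanSpace ℝ (Fin n)) 1, (s v.1) ^ p

/-- Hadamard's inequality. -/
lemma my_abs_det_le_prod_norm {n : ℕ}
    (A : EuclideanSpace ℝ (Fin n) →ₗ[ℝ] EuclideanSpace ℝ (Fin n))
    (b : OrthonormalBasis (Fin n) ℝ (EuclideanSpace ℝ (Fin n))) :
    |LinearMap.det A| ≤ ∏ i, ‖A (b i)‖ := by
  have h : finrank ℝ (EuclideanSpace ℝ (Fin n)) = Fintype.card (Fin n) := by
    simp [finrank_euclideanSpace_fin]
  haveI i1 : WellFoundedLT (Fin n) := inferInstance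
  set f : Fin n → EuclideanSpace ℝ (Fin n) := fun i => A (b i) with hf
  have hdet := InnerProductSpace.gramSchmidtOrthonormalBasis_det h f
  set G := InnerProductSpace.gramSchmidtOrthonormalBasis h f with hG
  have h1 : G.toBasis.det f = LinearMap.det A * G.toBasis.det ⇑b := by
    have : f = A ∘ ⇑b := rfl
    rw [this, Basis.det_comp]
  have h2 : |G.toBasis.det ⇑b| = 1 := by
    rcases G.det_to_matrix_orthonormalBasis_real b with h' | h' <;> rw [h'] <;> norm_num
  have h3 : |LinearMap.det A| = |∏ i, ⟪G i, f i⟫| := by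
    rw [← hdet, h1, abs_mul, h2, mul_one]
  rw [h3, Finset.abs_prod]
  refine Finset.prod_le_prod (fun i _ => abs_nonneg _) (fun i _ => ?_)
  calc |⟪G i, f i⟫| ≤ ‖G i‖ * ‖f i‖ := abs_real_inner_le_norm _ _
    _ = ‖f i‖ := by rw [G.orthonormal.1 i, one_mul]

lemma my_exists_onb {n : ℕ} (hn : 1 ≤ n) (v₀ : EuclideanSpace ℝ (Fin n)) (hv : ‖v₀‖ = 1) :
    ∃ b : OrthonormalBasis (Fin n) ℝ (EuclideanSpace ℝ (Fin n)), b ⟨0, hn⟩ = v₀ := by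
  have h : finrank ℝ (EuclideanSpace ℝ (Fin n)) = Fintype.card (Fin n) := by
    simp [finrank_euclideanSpace_fin]
  set i₀ : Fin n := ⟨0, hn⟩
  have horth : Orthonormal ℝ (({i₀} : Set (Fin n)).restrict (fun _ => v₀)) := by
    constructor
    · intro i; exact hv
    · intro i j hij
      exfalso
      exact hij (Subtype.ext (i.2.trans j.2.symm))
  obtain ⟨b, hb⟩ := horth.exists_orthonormalBasis_extension_of_card_eq h
  exact ⟨b, hb i₀ rfl⟩

lemma my_abs_det_le {n : ℕ} (hn : 1 ≤ n)
    (A : EuclideanSpace ℝ (Fin n) →ₗ[ℝ] EuclideanSpace ℝ (Fin n))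
    (v₀ : EuclideanSpace ℝ (Fin n)) (hv₀ : ‖v₀‖ = 1) (M : ℝ)
    (hM : ∀ v : EuclideanSpace ℝ (Fin n), ‖v‖ = 1 → ‖A v‖ ≤ M) :
    |LinearMap.det A| ≤ ‖A v₀‖ * M ^ (n - 1) := by
  obtain ⟨b, hb⟩ := my_exists_onb hn v₀ hv₀
  set i₀ : Fin n := ⟨0, hn⟩
  calc |LinearMap.det A| ≤ ∏ i, ‖A (b i)‖ := my_abs_det_le_prod_norm A b
    _ = ‖A (b i₀)‖ * ∏ i ∈ {i₀}ᶜ, ‖A (b i)‖ := (Fintype.prod_eq_mul_prod_compl i₀ _)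
    _ ≤ ‖A v₀‖ * M ^ (n - 1) := by
        rw [hb]
        refine mul_le_mul_of_nonneg_left ?_ (norm_nonneg _)
        calc ∏ i ∈ {i₀}ᶜ, ‖A (b i)‖ ≤ ∏ i ∈ ({i₀}ᶜ : Finset (Fin n)), M :=
              Finset.prod_le_prod (fun i _ => norm_nonneg _)
                (fun i _ => hM (b i) (b.orthonormal.1 i))
          _ = M ^ (n - 1) := by
              rw [Finset.prod_const, Finset.card_compl, Finset.card_singleton,
                Fintype.card_fin]

lemma my_seminorm_bound {n : ℕ} (s : Seminorm ℝ (EuclideanSpace ℝ (Fin n))) :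
    ∃ C : ℝ, 0 ≤ C ∧ ∀ x, s x ≤ C * ‖x‖ := by
  set b := stdOrthonormalBasis ℝ (EuclideanSpace ℝ (Fin n)) with hb
  refine ⟨∑ i, s (b i), Finset.sum_nonneg fun i _ => apply_nonneg s _, fun x => ?_⟩
  conv_lhs => rw [← b.sum_repr x]
  calc s (∑ i, b.repr x i • b i) ≤ ∑ i, s (b.repr x i • b i) :=
        Finset.le_sum_of_subadditive s (map_zero s).le (map_add_le_add s) _ _
    _ ≤ ∑ i, s (b i) * ‖x‖ := Finset.sum_le_sum fun i _ => by
        rw [map_smul_eq_mul]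
        have h1 : ‖b.repr x i‖ ≤ ‖x‖ := by
          rw [b.repr_apply_apply, Real.norm_eq_abs]
          calc |⟪b i, x⟫| ≤ ‖b i‖ * ‖x‖ := abs_real_inner_le_norm _ _
            _ = ‖x‖ := by rw [b.orthonormal.1 i, one_mul]
        calc ‖b.repr x i‖ * s (b i) ≤ ‖x‖ * s (b i) :=
              mul_le_mul_of_nonneg_right h1 (apply_nonneg s _)
          _ = s (b i) * ‖x‖ := mul_comm _ _
    _ = (∑ i, s (b i)) * ‖x‖ := (Finset.sum_mul _ _ _).symm

/-- Let `s` be a seminorm on `ℝⁿ`, `Q ≥ 1`, and `T : ℝⁿ → ℝⁿ` bijective linear such that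
the norm `v ↦ |T v|` is `Q`-quasi-conformal. Then
`Q^{-(n-1)}·𝓘ⁿ_+(s) ≤ |det T|⁻¹·𝓘ⁿ_+(s ∘ T) ≤ Q^{n-1}·𝓘ⁿ_+(s)`. -/
theorem Iplus_comp_quasiconformal (n : ℕ) (hn : 1 ≤ n)
    (s : Seminorm ℝ (EuclideanSpace ℝ (Fin n))) (Q : ℝ) (hQ : 1 ≤ Q)
    (T : EuclideanSpace ℝ (Fin n) ≃ₗ[ℝ] EuclideanSpace ℝ (Fin n))
    (hT : ∀ v w : EuclideanSpace ℝ (Fin n), ‖v‖ = 1 → ‖w‖ = 1 → ‖T v‖ ≤ Q * ‖T w‖) :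
    (Q ^ (n - 1))⁻¹ * Iplus n n s ≤
        |LinearMap.det T.toLinearMap|⁻¹ * Iplus n n (s.comp T.toLinearMap) ∧
      |LinearMap.det T.toLinearMap|⁻¹ * Iplus n n (s.comp T.toLinearMap) ≤
        Q ^ (n - 1) * Iplus n n s := by
  classical
  haveI : Nonempty (Fin n) := ⟨⟨0, hn⟩⟩
  haveI : Nontrivial (EuclideanSpace ℝ (Fin n)) := by
    refine ⟨⟨EuclideanSpace.single ⟨0, hn⟩ (1 : ℝ), 0, fun h => ?_⟩⟩
    have h2 := congrArg norm h
    rw [EuclideanSpace.norm_single] at h2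
    simp at h2
  have hne : (sphere (0 : EuclideanSpace ℝ (Fin n)) 1).Nonempty :=
    NormedSpace.sphere_nonempty.mpr zero_le_one
  haveI : Nonempty (sphere (0 : EuclideanSpace ℝ (Fin n)) 1) := hne.to_subtype
  have hTc : Continuous fun v : EuclideanSpace ℝ (Fin n) => ‖T v‖ :=
    T.toLinearMap.continuous_of_finiteDimensional.norm
  obtain ⟨v₀, hv₀mem, hv₀min⟩ :=
    (isCompact_sphere (0 : EuclideanSpace ℝ (Fin n)) 1).exists_isMinOn hne hTc.continuousOn
  obtain ⟨w₀, hw₀mem, hw₀max⟩ :=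
    (isCompact_sphere (0 : EuclideanSpace ℝ (Fin n)) 1).exists_isMaxOn hne hTc.continuousOn
  rw [mem_sphere_zero_iff_norm] at hv₀mem hw₀mem
  set m := ‖T v₀‖ with hm_def
  set M := ‖T w₀‖ with hM_def
  have hmin : ∀ v : EuclideanSpace ℝ (Fin n), ‖v‖ = 1 → m ≤ ‖T v‖ := fun v hv =>
    hv₀min (mem_sphere_zero_iff_norm.mpr hv)
  have hmax : ∀ v : EuclideanSpace ℝ (Fin n), ‖v‖ = 1 → ‖T v‖ ≤ M := fun v hv =>
    hw₀max (mem_sphere_zero_iff_norm.mpr hv)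
  have hv₀ne : v₀ ≠ 0 := fun h => by simp [h] at hv₀mem
  have hm : 0 < m := by
    rw [hm_def, norm_pos_iff]
    simpa using hv₀ne
  have hMm : m ≤ M := hmin w₀ hw₀mem
  have hM : 0 < M := lt_of_lt_of_le hm hMm
  have hQ0 : 0 < Q := lt_of_lt_of_le one_pos hQ
  have hQM : M ≤ Q * m := hT w₀ v₀ hw₀mem hv₀mem
  set a := |LinearMap.det T.toLinearMap| with ha_def
  -- upper bound on the determinant
  have hdet_ub : a ≤ m * M ^ (n - 1) := by
    have := my_abs_det_le hn T.toLinearMap v₀ hv₀mem M (fun v hv => hmax v hv)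
    simpa using this
  -- bound for the inverse map
  have hsymm_bound : ∀ u : EuclideanSpace ℝ (Fin n), ‖u‖ = 1 → ‖T.symm u‖ ≤ m⁻¹ := by
    intro u hu
    have hune : u ≠ 0 := fun h => by simp [h] at hu
    have hx : T.symm u ≠ 0 := fun h => hune (by
      have := congrArg T h
      simpa using this)
    have hxn : 0 < ‖T.symm u‖ := norm_pos_iff.mpr hx
    have h1 : m ≤ ‖T (‖T.symm u‖⁻¹ • T.symm u)‖ := by
      refine hmin _ ?_
      rw [norm_smul, norm_inv, norm_norm, inv_mul_cancel₀ hxn.ne']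
    rw [_root_.map_smul, LinearEquiv.apply_symm_apply, norm_smul, norm_inv, norm_norm, hu,
      mul_one] at h1
    nlinarith [mul_inv_cancel₀ hm.ne', mul_inv_cancel₀ hxn.ne']
  have hu₀norm : ‖(M⁻¹ • T w₀ : EuclideanSpace ℝ (Fin n))‖ = 1 := by
    rw [norm_smul, norm_inv, Real.norm_eq_abs, abs_of_pos hM, ← hM_def, inv_mul_cancel₀ hM.ne']
  have hdet_symm : |LinearMap.det T.symm.toLinearMap| ≤ M⁻¹ * (m⁻¹) ^ (n - 1) := by
    have h2 := my_abs_det_le hn T.symm.toLinearMap _ hu₀norm m⁻¹ hsymm_bound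
    have h3 : ‖T.symm.toLinearMap (M⁻¹ • T w₀)‖ = M⁻¹ := by
      show ‖T.symm (M⁻¹ • T w₀)‖ = M⁻¹
      rw [_root_.map_smul, LinearEquiv.symm_apply_apply, norm_smul, norm_inv, Real.norm_eq_abs,
        abs_of_pos hM, hw₀mem, mul_one]
    rwa [h3] at h2
  have hdetmul : a * |LinearMap.det T.symm.toLinearMap| = 1 := by
    rw [ha_def, ← abs_mul, ← LinearMap.det_comp]
    have : T.toLinearMap ∘ₗ T.symm.toLinearMap = LinearMap.id := by
      ext x; simp
    rw [this, LinearMap.det_id, abs_one]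
  have hd_pos : 0 < |LinearMap.det T.symm.toLinearMap| := by
    rcases (abs_nonneg (LinearMap.det T.symm.toLinearMap)).lt_or_eq with h | h
    · exact h
    · exfalso; rw [← h] at hdetmul; simp at hdetmul
  have ha_pos : 0 < a := by
    rcases (abs_nonneg (LinearMap.det T.toLinearMap)).lt_or_eq with h | h
    · exact h
    · exfalso; rw [ha_def] at hdetmul; rw [← h] at hdetmul; simp at hdetmul
  have hdet_lb : M * m ^ (n - 1) ≤ a := by
    have hc : (0:ℝ) < M * m ^ (n - 1) := mul_pos hM (pow_pos hm _)
    have h4 : |LinearMap.det T.symm.toLinearMap| ≤ (M * m ^ (n - 1))⁻¹ := by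
      rw [mul_inv, ← inv_pow]
      exact hdet_symm
    have h5 : a = |LinearMap.det T.symm.toLinearMap|⁻¹ :=
      eq_inv_of_mul_eq_one_left hdetmul
    rw [h5]
    calc M * m ^ (n - 1) = ((M * m ^ (n - 1))⁻¹)⁻¹ := (inv_inv _).symm
      _ ≤ |LinearMap.det T.symm.toLinearMap|⁻¹ := by
          exact inv_anti₀ hd_pos h4
  -- rewrite `Iplus` using natural powers
  have hIs : Iplus n n s = ⨆ v : sphere (0 : EuclideanSpace ℝ (Fin n)) 1, (s v.1) ^ n :=
    iSup_congr fun v => Real.rpow_natCast _ n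
  have hIst : Iplus n n (s.comp T.toLinearMap)
      = ⨆ v : sphere (0 : EuclideanSpace ℝ (Fin n)) 1, (s (T v.1)) ^ n :=
    iSup_congr fun v => Real.rpow_natCast _ n
  obtain ⟨C, hC0, hC⟩ := my_seminorm_bound s
  have hbddB : BddAbove (Set.range fun v : sphere (0 : EuclideanSpace ℝ (Fin n)) 1 =>
      (s v.1) ^ n) := by
    refine ⟨C ^ n, ?_⟩
    rintro x ⟨v, rfl⟩
    have hv : ‖v.1‖ = 1 := mem_sphere_zero_iff_norm.mp v.2
    have h6 := hC v.1
    rw [hv, mul_one] at h6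
    exact pow_le_pow_left₀ (apply_nonneg s _) h6 n
  have hbddA : BddAbove (Set.range fun v : sphere (0 : EuclideanSpace ℝ (Fin n)) 1 =>
      (s (T v.1)) ^ n) := by
    refine ⟨(C * M) ^ n, ?_⟩
    rintro x ⟨v, rfl⟩
    have hv : ‖v.1‖ = 1 := mem_sphere_zero_iff_norm.mp v.2
    have h6 : s (T v.1) ≤ C * M :=
      (hC (T v.1)).trans (mul_le_mul_of_nonneg_left (hmax _ hv) hC0)
    exact pow_le_pow_left₀ (apply_nonneg s _) h6 n
  rw [hIs, hIst]
  set B := ⨆ v : sphere (0 : EuclideanSpace ℝ (Fin n)) 1, (s v.1) ^ n with hB_def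
  set A' := ⨆ v : sphere (0 : EuclideanSpace ℝ (Fin n)) 1, (s (T v.1)) ^ n with hA'_def
  have hB0 : 0 ≤ B := Real.iSup_nonneg fun v => pow_nonneg (apply_nonneg s _) n
  -- key upper bound
  have key1 : A' ≤ M ^ n * B := by
    rw [hA'_def]
    refine ciSup_le fun v => ?_
    have hv : ‖v.1‖ = 1 := mem_sphere_zero_iff_norm.mp v.2
    have hvne : v.1 ≠ 0 := fun h => by simp [h] at hv
    have hTvne : T v.1 ≠ 0 := fun h => hvne (by simpa using congrArg T.symm h)
    have hTvn : 0 < ‖T v.1‖ := norm_pos_iff.mpr hTvne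
    set u : EuclideanSpace ℝ (Fin n) := ‖T v.1‖⁻¹ • T v.1 with hu_def
    have humem : u ∈ sphere (0 : EuclideanSpace ℝ (Fin n)) 1 := by
      rw [mem_sphere_zero_iff_norm, hu_def, norm_smul, norm_inv, norm_norm,
        inv_mul_cancel₀ hTvn.ne']
    have hsu : s (T v.1) = ‖T v.1‖ * s u := by
      rw [hu_def, map_smul_eq_mul, norm_inv, norm_norm, ← mul_assoc,
        mul_inv_cancel₀ hTvn.ne', one_mul]
    calc (s (T v.1)) ^ n = ‖T v.1‖ ^ n * (s u) ^ n := by rw [hsu, mul_pow]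
      _ ≤ M ^ n * B :=
          mul_le_mul (pow_le_pow_left₀ (norm_nonneg _) (hmax _ hv) n)
            (le_ciSup hbddB (⟨u, humem⟩ : sphere (0 : EuclideanSpace ℝ (Fin n)) 1))
            (pow_nonneg (apply_nonneg s _) n) (pow_nonneg hM.le n)
  -- key lower bound
  have key2 : B ≤ (m⁻¹) ^ n * A' := by
    rw [hB_def]
    refine ciSup_le fun v => ?_
    have hv : ‖v.1‖ = 1 := mem_sphere_zero_iff_norm.mp v.2
    have hvne : v.1 ≠ 0 := fun h => by simp [h] at hv
    have hxne : T.symm v.1 ≠ 0 := fun h => hvne (by simpa using congrArg T h)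
    have hxn : 0 < ‖T.symm v.1‖ := norm_pos_iff.mpr hxne
    set u : EuclideanSpace ℝ (Fin n) := ‖T.symm v.1‖⁻¹ • T.symm v.1 with hu_def
    have humem : u ∈ sphere (0 : EuclideanSpace ℝ (Fin n)) 1 := by
      rw [mem_sphere_zero_iff_norm, hu_def, norm_smul, norm_inv, norm_norm,
        inv_mul_cancel₀ hxn.ne']
    have hTu : T u = ‖T.symm v.1‖⁻¹ • v.1 := by
      rw [hu_def, _root_.map_smul, LinearEquiv.apply_symm_apply]
    have hsv : s v.1 = ‖T.symm v.1‖ * s (T u) := by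
      rw [hTu, map_smul_eq_mul, norm_inv, norm_norm, ← mul_assoc,
        mul_inv_cancel₀ hxn.ne', one_mul]
    calc (s v.1) ^ n = ‖T.symm v.1‖ ^ n * (s (T u)) ^ n := by rw [hsv, mul_pow]
      _ ≤ (m⁻¹) ^ n * A' :=
          mul_le_mul (pow_le_pow_left₀ (norm_nonneg _) (hsymm_bound v.1 hv) n)
            (le_ciSup hbddA (⟨u, humem⟩ : sphere (0 : EuclideanSpace ℝ (Fin n)) 1))
            (pow_nonneg (apply_nonneg s _) n) (pow_nonneg (inv_nonneg.mpr hm.le) n)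
  have hA_lb : m ^ n * B ≤ A' := by
    calc m ^ n * B ≤ m ^ n * ((m⁻¹) ^ n * A') :=
          mul_le_mul_of_nonneg_left key2 (pow_nonneg hm.le n)
      _ = A' := by
          rw [← mul_assoc, ← mul_pow, mul_inv_cancel₀ hm.ne', one_pow, one_mul]
  have hQk : (Q : ℝ) ^ (n - 1) ≠ 0 := pow_ne_zero _ hQ0.ne'
  have hMk : M ^ (n - 1) ≤ Q ^ (n - 1) * m ^ (n - 1) := by
    rw [← mul_pow]
    exact pow_le_pow_left₀ hM.le hQM _
  constructor
  · rw [show a⁻¹ * A' = A' / a from inv_mul_eq_div a A', le_div_iff₀ ha_pos]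
    calc (Q ^ (n - 1))⁻¹ * B * a ≤ (Q ^ (n - 1))⁻¹ * B * (m * M ^ (n - 1)) :=
          mul_le_mul_of_nonneg_left hdet_ub
            (mul_nonneg (inv_nonneg.mpr (pow_nonneg hQ0.le _)) hB0)
      _ ≤ (Q ^ (n - 1))⁻¹ * B * (m * (Q ^ (n - 1) * m ^ (n - 1))) :=
          mul_le_mul_of_nonneg_left (mul_le_mul_of_nonneg_left hMk hm.le)
            (mul_nonneg (inv_nonneg.mpr (pow_nonneg hQ0.le _)) hB0)
      _ = m ^ n * B := by
          have h9 : m ^ n = m * m ^ (n - 1) := by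
            rw [← pow_succ', Nat.sub_add_cancel hn]
          rw [h9]
          field_simp
      _ ≤ A' := hA_lb
  · rw [show a⁻¹ * A' = A' / a from inv_mul_eq_div a A', div_le_iff₀ ha_pos]
    calc A' ≤ M ^ n * B := key1
      _ = M ^ (n - 1) * M * B := by
          have h9 : M ^ n = M ^ (n - 1) * M := by
            rw [← pow_succ, Nat.sub_add_cancel hn]
          rw [h9]
      _ ≤ Q ^ (n - 1) * m ^ (n - 1) * M * B :=
          mul_le_mul_of_nonneg_right (mul_le_mul_of_nonneg_right hMk hM.le) hB0
      _ = Q ^ (n - 1) * B * (M * m ^ (n - 1)) := by ring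
      _ ≤ Q ^ (n - 1) * B * a :=
          mul_le_mul_of_nonneg_left hdet_lb (mul_nonneg (pow_nonneg hQ0.le _) hB0)
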